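/- arXiv:1902.05658 — 2 statements merged into one kernel-verified Lean document; each statement's English description precedes it below -/
import Mathlib

section
/- If X₁ and X₂ are i.i.d. Weibull with shape α > 0 and scale β > 0, then E[(log X₁ + log X₂)/(2 log 2) − log(min{X₁, X₂})/log 2] = 1/α. That is, the symmetric kernel H₁(x₁,x₂) = (log x₁ + log x₂)/(2 log 2) − log(min{x₁,x₂})/log 2 is an unbiased estimator of 1/α. -/
open MeasureTheory ProbabilityTheory Real

/-- CDF of the Weibull distribution with shape `α` and scale `β`. -/
noncomputable def weibullCDF (α β x : ℝ) : ℝ :=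
  if x ≤ 0 then 0 else 1 - Real.exp (-(x / β) ^ α)

/-- `X` is Weibull(α, β)-distributed under `μ`. -/
def IsWeibull {Ω : Type*} [MeasurableSpace Ω] (μ : Measure Ω) (X : Ω → ℝ)
    (α β : ℝ) : Prop :=
  ∀ x : ℝ, μ {ω | X ω ≤ x} = ENNReal.ofReal (weibullCDF α β x)

open Set Filter Topology
open scoped ENNReal


noncomputable def Gaux (x : ℝ) : ℝ := -Real.log x / (1+x) + Real.log x - Real.log (1+x)

lemma Gaux_deriv {x : ℝ} (hx : 0 < x) :
    HasDerivAt Gaux (Real.log x / (1+x)^2) x := by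
  have h1x : (0:ℝ) < 1 + x := by linarith
  have hlog : HasDerivAt Real.log x⁻¹ x := Real.hasDerivAt_log hx.ne'
  have h1 : HasDerivAt (fun y : ℝ => -Real.log y / (1+y))
      ((-(x⁻¹) * (1+x) - (-Real.log x) * 1) / (1+x)^2) x := by
    have hd : HasDerivAt (fun y : ℝ => 1 + y) (0 + 1) x :=
      (hasDerivAt_const x (1:ℝ)).add (hasDerivAt_id x)
    exact (hlog.neg.div hd h1x.ne').congr_deriv (by simp only [Pi.neg_apply]; ring)
  have h2 : HasDerivAt (fun y : ℝ => Real.log (1+y)) ((1+x)⁻¹) x := by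
    have := (Real.hasDerivAt_log h1x.ne').comp x
      ((hasDerivAt_const x (1:ℝ)).add (hasDerivAt_id x))
    exact this.congr_deriv (by ring)
  have := (h1.add hlog).sub h2
  refine this.congr_deriv ?_
  field_simp
  ring

lemma Gaux_tendsto : Tendsto Gaux atTop (𝓝 0) := by
  have hA : Tendsto (fun x : ℝ => -Real.log x / (1+x)) atTop (𝓝 0) := by
    have := Real.tendsto_pow_log_div_mul_add_atTop 1 1 1 one_ne_zero
    simp only [pow_one] at this
    have h := this.neg
    simp only [neg_zero] at h
    refine h.congr' ?_
    filter_upwards [eventually_gt_atTop (0:ℝ)] with x hx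
    rw [neg_div]
    ring_nf
  have hB : Tendsto (fun x : ℝ => Real.log x - Real.log (1+x)) atTop (𝓝 0) := by
    have hq : Tendsto (fun x : ℝ => x / (1+x)) atTop (𝓝 1) := by
      have h1 : Tendsto (fun x : ℝ => 1 - (1+x)⁻¹) atTop (𝓝 (1 - 0)) :=
        tendsto_const_nhds.sub (tendsto_inv_atTop_zero.comp
          (tendsto_atTop_add_const_left _ 1 tendsto_id))
      rw [sub_zero] at h1
      refine h1.congr' ?_
      filter_upwards [eventually_gt_atTop (0:ℝ)] with x hx
      have h1x : (1:ℝ) + x ≠ 0 := by positivity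
      field_simp
      ring
    have hc : Tendsto (fun y : ℝ => Real.log y) (𝓝 1) (𝓝 0) := by
      have := (Real.continuousAt_log one_ne_zero).tendsto
      simpa using this
    have := hc.comp hq
    refine this.congr' ?_
    filter_upwards [eventually_gt_atTop (0:ℝ)] with x hx
    have h1x : (0:ℝ) < 1 + x := by linarith
    simp only [Function.comp]
    rw [Real.log_div hx.ne' h1x.ne']
  have := hA.add hB
  rw [add_zero] at this
  refine this.congr (fun x => ?_)
  simp [Gaux]
  ring

lemma integral_J : ∫ x in Ioi (1:ℝ), Real.log x / (1+x)^2 = Real.log 2 := by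
  have h := integral_Ioi_of_hasDerivAt_of_nonneg' (a := 1) (g := Gaux)
    (g' := fun x => Real.log x / (1+x)^2)
    (fun x hx => Gaux_deriv (lt_of_lt_of_le one_pos hx))
    (fun x hx => div_nonneg (Real.log_nonneg (le_of_lt hx)) (by positivity))
    Gaux_tendsto
  rw [h]
  simp [Gaux]
  norm_num

lemma integrableOn_J : IntegrableOn (fun x => Real.log x / (1+x)^2) (Ioi (1:ℝ)) := by
  exact integrableOn_Ioi_deriv_of_nonneg' (fun x hx => Gaux_deriv (lt_of_lt_of_le one_pos hx))
    (fun x hx => div_nonneg (Real.log_nonneg (le_of_lt hx)) (by positivity))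
    Gaux_tendsto


lemma key_eq : ∀ x ∈ Ioi (0:ℝ),
    (|(-1:ℝ)| * x ^ ((-1:ℝ) - 1)) • (indicator (Ioc (0:ℝ) 1)
      (fun y => -Real.log y / (1+y)^2)) (x ^ (-1:ℝ))
    = indicator (Ici (1:ℝ)) (fun x => Real.log x / (1+x)^2) x := by
  intro x hx
  have hx0 : (0:ℝ) < x := hx
  have hxinv : x ^ (-1:ℝ) = x⁻¹ := by rw [Real.rpow_neg_one]
  have hx2 : x ^ ((-1:ℝ) - 1) = (x^2)⁻¹ := by
    rw [show ((-1:ℝ) - 1) = -(2:ℕ) by norm_num, Real.rpow_neg hx0.le, Real.rpow_natCast]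
  by_cases h : 1 ≤ x
  · have hmem : x⁻¹ ∈ Ioc (0:ℝ) 1 := ⟨inv_pos.mpr hx0, inv_le_one_of_one_le₀ h⟩
    rw [hxinv, hx2, indicator_of_mem hmem, indicator_of_mem (mem_Ici.mpr h)]
    have h1x : (0:ℝ) < 1 + x := by linarith
    have h1xi : (0:ℝ) < 1 + x⁻¹ := by positivity
    rw [Real.log_inv]
    rw [smul_eq_mul]
    field_simp
    ring_nf
  · have h1 : 1 < x⁻¹ := one_lt_inv_iff₀.mpr ⟨hx0, lt_of_not_ge h⟩
    have hmem : x⁻¹ ∉ Ioc (0:ℝ) 1 := fun hc => absurd hc.2 (not_le.mpr h1)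
    rw [hxinv, indicator_of_notMem hmem, indicator_of_notMem (fun (hc : x ∈ Ici 1) => h hc), smul_zero]

lemma inter_Ici : Ici (1:ℝ) ∩ Ioi 0 = Ici 1 :=
  inter_eq_self_of_subset_left (fun x hx => mem_Ioi.mpr (lt_of_lt_of_le one_pos hx))

lemma inter_Ioc : Ioc (0:ℝ) 1 ∩ Ioi 0 = Ioc 0 1 :=
  inter_eq_self_of_subset_left (fun x hx => hx.1)

lemma hI_Ici : IntegrableOn (indicator (Ici (1:ℝ)) (fun x => Real.log x / (1+x)^2)) (Ioi (0:ℝ)) := by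
  rw [IntegrableOn, integrable_indicator_iff measurableSet_Ici, IntegrableOn,
    Measure.restrict_restrict measurableSet_Ici, inter_Ici]
  have hJ := integrableOn_J
  rw [← integrableOn_Ici_iff_integrableOn_Ioi] at hJ
  exact hJ

lemma integrableOn_K : IntegrableOn (fun y => -Real.log y / (1+y)^2) (Ioc (0:ℝ) 1) := by
  have hiff := integrableOn_Ioi_comp_rpow_iff
    (indicator (Ioc (0:ℝ) 1) (fun y => -Real.log y / (1+y)^2)) (p := (-1:ℝ)) (by norm_num)
  have h1 : IntegrableOn (fun x => (|(-1:ℝ)| * x ^ ((-1:ℝ) - 1)) • (indicator (Ioc (0:ℝ) 1)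
      (fun y => -Real.log y / (1+y)^2)) (x ^ (-1:ℝ))) (Ioi (0:ℝ)) := by
    apply hI_Ici.congr_fun _ measurableSet_Ioi
    intro x hx
    exact (key_eq x hx).symm
  have h2 := hiff.mp h1
  rw [IntegrableOn, integrable_indicator_iff measurableSet_Ioc, IntegrableOn,
    Measure.restrict_restrict measurableSet_Ioc, inter_Ioc] at h2
  exact h2

lemma integral_K : ∫ y in Ioc (0:ℝ) 1, -Real.log y / (1+y)^2 = Real.log 2 := by
  have h := integral_comp_rpow_Ioi (indicator (Ioc (0:ℝ) 1)
    (fun y => -Real.log y / (1+y)^2)) (p := (-1:ℝ)) (by norm_num)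
  have h1 : ∫ x in Ioi (0:ℝ), (|(-1:ℝ)| * x ^ ((-1:ℝ) - 1)) • (indicator (Ioc (0:ℝ) 1)
      (fun y => -Real.log y / (1+y)^2)) (x ^ (-1:ℝ))
      = ∫ x in Ioi (0:ℝ), indicator (Ici (1:ℝ)) (fun x => Real.log x / (1+x)^2) x :=
    setIntegral_congr_fun measurableSet_Ioi key_eq
  rw [h1] at h
  rw [setIntegral_indicator measurableSet_Ici, setIntegral_indicator measurableSet_Ioc,
    inter_comm, inter_Ici, inter_comm, inter_Ioc] at h
  rw [← h, integral_Ici_eq_integral_Ioi, integral_J]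

lemma lintegral_F : ∫⁻ t in Ioi (0:ℝ), ENNReal.ofReal (|Real.log t| / (1+t)^2)
    = ENNReal.ofReal (2 * Real.log 2) := by
  have hsplit : Ioc (0:ℝ) 1 ∪ Ioi 1 = Ioi 0 := Ioc_union_Ioi_eq_Ioi zero_le_one
  rw [← hsplit, lintegral_union measurableSet_Ioi Ioc_disjoint_Ioi_same]
  have h1 : ∫⁻ t in Ioc (0:ℝ) 1, ENNReal.ofReal (|Real.log t| / (1+t)^2)
      = ENNReal.ofReal (Real.log 2) := by
    calc ∫⁻ t in Ioc (0:ℝ) 1, ENNReal.ofReal (|Real.log t| / (1+t)^2)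
        = ∫⁻ t in Ioc (0:ℝ) 1, ENNReal.ofReal (-Real.log t / (1+t)^2) := by
          refine setLIntegral_congr_fun measurableSet_Ioc (fun t ht => ?_)
          rw [abs_of_nonpos (Real.log_nonpos ht.1.le ht.2), neg_div]
      _ = ENNReal.ofReal (∫ y in Ioc (0:ℝ) 1, -Real.log y / (1+y)^2) := by
          rw [ofReal_integral_eq_lintegral_ofReal integrableOn_K]
          filter_upwards [ae_restrict_mem measurableSet_Ioc] with t ht
          exact div_nonneg (neg_nonneg.mpr (Real.log_nonpos ht.1.le ht.2)) (by positivity)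
      _ = ENNReal.ofReal (Real.log 2) := by rw [integral_K]
  have h2 : ∫⁻ t in Ioi (1:ℝ), ENNReal.ofReal (|Real.log t| / (1+t)^2)
      = ENNReal.ofReal (Real.log 2) := by
    calc ∫⁻ t in Ioi (1:ℝ), ENNReal.ofReal (|Real.log t| / (1+t)^2)
        = ∫⁻ t in Ioi (1:ℝ), ENNReal.ofReal (Real.log t / (1+t)^2) := by
          refine setLIntegral_congr_fun measurableSet_Ioi (fun t ht => ?_)
          rw [abs_of_nonneg (Real.log_nonneg ht.le)]
      _ = ENNReal.ofReal (∫ x in Ioi (1:ℝ), Real.log x / (1+x)^2) := by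
          rw [ofReal_integral_eq_lintegral_ofReal integrableOn_J]
          filter_upwards [ae_restrict_mem measurableSet_Ioi] with t ht
          exact div_nonneg (Real.log_nonneg ht.le) (by positivity)
      _ = ENNReal.ofReal (Real.log 2) := by rw [integral_J]
  rw [h1, h2, ← ENNReal.ofReal_add (Real.log_nonneg one_le_two) (Real.log_nonneg one_le_two)]
  norm_num [two_mul]

lemma integral_texp {c : ℝ} (hc : 0 < c) :
    ∫ x in Ioi (0:ℝ), x * Real.exp (-(c*x)) = c⁻¹ * c⁻¹ := by
  have hG : Real.Gamma 2 = ∫ x in Ioi (0:ℝ), Real.exp (-x) * x := by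
    rw [Real.Gamma_eq_integral two_pos]
    refine setIntegral_congr_fun measurableSet_Ioi (fun x hx => ?_)
    rw [show (2:ℝ)-1 = 1 by norm_num, Real.rpow_one]
  have hG2 : Real.Gamma 2 = 1 := by
    rw [show (2:ℝ) = 1 + 1 by norm_num, Real.Gamma_add_one one_ne_zero, Real.Gamma_one, one_mul]
  have hscale := integral_comp_mul_left_Ioi (fun y => Real.exp (-y) * y) 0 hc
  rw [mul_zero, ← hG, hG2] at hscale
  have hkey : ∫ x in Ioi (0:ℝ), Real.exp (-(c*x)) * (c*x) = c⁻¹ := by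
    simpa using hscale
  calc ∫ x in Ioi (0:ℝ), x * Real.exp (-(c*x))
      = ∫ x in Ioi (0:ℝ), c⁻¹ * (Real.exp (-(c*x)) * (c*x)) := by
        refine setIntegral_congr_fun measurableSet_Ioi (fun x hx => ?_)
        field_simp
    _ = c⁻¹ * ∫ x in Ioi (0:ℝ), Real.exp (-(c*x)) * (c*x) := by rw [integral_const_mul]
    _ = c⁻¹ * c⁻¹ := by rw [hkey]

lemma integrableOn_texp {c : ℝ} (hc : 0 < c) :
    IntegrableOn (fun x => x * Real.exp (-(c*x))) (Ioi (0:ℝ)) := by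
  have h0 : IntegrableOn (fun x => Real.exp (-x) * x ^ ((2:ℝ)-1)) (Ioi (0:ℝ)) :=
    Real.GammaIntegral_convergent two_pos
  have h1 : IntegrableOn (fun x => Real.exp (-x) * x) (Ioi (0:ℝ)) := by
    apply h0.congr_fun _ measurableSet_Ioi
    intro x hx
    simp [show (2:ℝ)-1 = 1 by norm_num, Real.rpow_one]
  have h2 := (integrableOn_Ioi_comp_mul_left_iff (fun y => Real.exp (-y) * y) 0 hc).mpr
    (by rwa [mul_zero])
  have h3 : IntegrableOn (fun x => c⁻¹ * (Real.exp (-(c*x)) * (c*x))) (Ioi (0:ℝ)) :=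
    h2.const_mul c⁻¹
  apply h3.congr_fun _ measurableSet_Ioi
  intro x hx
  field_simp

lemma lintegral_texp {c : ℝ} (hc : 0 < c) :
    ∫⁻ x in Ioi (0:ℝ), ENNReal.ofReal (x * Real.exp (-(c*x))) = ENNReal.ofReal (c⁻¹ * c⁻¹) := by
  rw [← integral_texp hc, ← ofReal_integral_eq_lintegral_ofReal (integrableOn_texp hc)]
  filter_upwards [ae_restrict_mem measurableSet_Ioi] with x hx
  exact mul_nonneg (le_of_lt hx) (Real.exp_pos _).le


lemma lintegral_scale (g : ℝ → ℝ≥0∞) (hg : Measurable g) {u : ℝ} (hu : 0 < u) :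
    ∫⁻ v in Ioi (0:ℝ), g v = ENNReal.ofReal u * ∫⁻ t in Ioi (0:ℝ), g (u * t) := by
  have hemb : MeasurableEmbedding (fun t : ℝ => u * t) :=
    (Homeomorph.mulLeft₀ u hu.ne').measurableEmbedding
  have hpre : (fun t : ℝ => u * t) ⁻¹' (Ioi 0) = Ioi 0 := by
    rw [preimage_const_mul_Ioi₀ _ hu, zero_div]
  have hmap : (Measure.map (fun t : ℝ => u * t) volume) = ENNReal.ofReal |u⁻¹| • volume :=
    Real.map_volume_mul_left hu.ne'
  have h1 : ∫⁻ t in Ioi (0:ℝ), g (u * t) ∂volume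
      = ∫⁻ v, g v ∂((Measure.map (fun t : ℝ => u * t) volume).restrict (Ioi 0)) := by
    rw [hemb.restrict_map, hpre, hemb.lintegral_map]
  rw [h1, hmap]
  rw [Measure.restrict_smul, lintegral_smul_measure]
  rw [abs_of_pos (inv_pos.mpr hu)]
  rw [smul_eq_mul, ← mul_assoc, ← ENNReal.ofReal_mul hu.le, mul_inv_cancel₀ hu.ne', ENNReal.ofReal_one, one_mul]

lemma lint_expdensity (g : ℝ → ℝ≥0∞) (hg : Measurable g) :
    ∫⁻ v, g v ∂(expMeasure 1) = ∫⁻ v in Ioi (0:ℝ), ENNReal.ofReal (Real.exp (-v)) * g v := by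
  have hd : expMeasure 1 = volume.withDensity (exponentialPDF 1) := rfl
  have hm : Measurable (exponentialPDF 1) := (measurable_exponentialPDFReal 1).ennreal_ofReal
  rw [hd, lintegral_withDensity_eq_lintegral_mul _ hm hg]
  simp only [Pi.mul_apply]
  rw [← lintegral_add_compl (fun v => exponentialPDF 1 v * g v) (measurableSet_Ioi (a := (0:ℝ)))]
  have hc : ∫⁻ v in (Ioi (0:ℝ))ᶜ, exponentialPDF 1 v * g v = 0 := by
    rw [compl_Ioi]
    rw [setLIntegral_congr (Iio_ae_eq_Iic (a := (0:ℝ))).symm]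
    rw [setLIntegral_congr_fun measurableSet_Iio (fun v (hv : v < 0) => by
      rw [exponentialPDF_of_neg hv, zero_mul])]
    simp
  rw [hc, add_zero]
  refine setLIntegral_congr_fun measurableSet_Ioi (fun v hv => ?_)
  rw [exponentialPDF_of_nonneg (le_of_lt hv)]
  norm_num

lemma lintegral_M :
    ∫⁻ p : ℝ × ℝ, ENNReal.ofReal |Real.log p.1 - Real.log p.2|
      ∂((expMeasure 1).prod (expMeasure 1)) = ENNReal.ofReal (2 * Real.log 2) := by
  haveI : IsProbabilityMeasure (expMeasure 1) := isProbabilityMeasure_expMeasure one_pos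
  have hF : Measurable fun p : ℝ × ℝ => ENNReal.ofReal |Real.log p.1 - Real.log p.2| :=
    (((Real.measurable_log.comp measurable_fst).sub
      (Real.measurable_log.comp measurable_snd)).abs).ennreal_ofReal
  rw [lintegral_prod _ hF.aemeasurable]
  have hinner_meas : ∀ u : ℝ, Measurable fun v =>
      ENNReal.ofReal |Real.log u - Real.log v| :=
    fun u => ((measurable_const.sub Real.measurable_log).abs).ennreal_ofReal
  have houter_meas : Measurable fun u => ∫⁻ v,
      ENNReal.ofReal |Real.log u - Real.log v| ∂(expMeasure 1) :=
    Measurable.lintegral_prod_right hF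
  rw [lint_expdensity _ houter_meas]
  -- transform the inner integral for u > 0
  have step1 : ∀ u : ℝ, 0 < u → (∫⁻ v, ENNReal.ofReal |Real.log u - Real.log v| ∂(expMeasure 1))
      = ENNReal.ofReal u * ∫⁻ t in Ioi (0:ℝ),
          ENNReal.ofReal (Real.exp (-(u*t))) * ENNReal.ofReal |Real.log t| := by
    intro u hu
    rw [lint_expdensity _ (hinner_meas u)]
    rw [lintegral_scale (fun v => ENNReal.ofReal (Real.exp (-v)) *
      ENNReal.ofReal |Real.log u - Real.log v|) (by fun_prop) hu]
    congr 1
    refine setLIntegral_congr_fun measurableSet_Ioi (fun t ht => ?_)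
    have hlog : Real.log (u * t) = Real.log u + Real.log t := Real.log_mul hu.ne' (ne_of_gt ht)
    rw [hlog]
    congr 2
    rw [show Real.log u - (Real.log u + Real.log t) = -(Real.log t) by ring, abs_neg]
  rw [setLIntegral_congr_fun measurableSet_Ioi (fun u (hu : u ∈ Ioi (0:ℝ)) => by rw [step1 u hu])]
  -- push constants inside the t-integral
  have hmt : ∀ u : ℝ, Measurable fun t =>
      ENNReal.ofReal (Real.exp (-(u*t))) * ENNReal.ofReal |Real.log t| :=
    fun u => ((Real.measurable_exp.comp (measurable_const_mul u).neg).ennreal_ofReal).mul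
      (Real.measurable_log.abs.ennreal_ofReal)
  have step2 : ∀ u : ℝ,
      ENNReal.ofReal (Real.exp (-u)) * (ENNReal.ofReal u * ∫⁻ t in Ioi (0:ℝ),
        ENNReal.ofReal (Real.exp (-(u*t))) * ENNReal.ofReal |Real.log t|)
      = ∫⁻ t in Ioi (0:ℝ), ENNReal.ofReal (Real.exp (-u)) * ENNReal.ofReal u *
          (ENNReal.ofReal (Real.exp (-(u*t))) * ENNReal.ofReal |Real.log t|) := by
    intro u
    rw [← lintegral_const_mul _ (hmt u), ← lintegral_const_mul _ ((hmt u).const_mul _)]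
    congr 1
    ext t
    ring
  rw [setLIntegral_congr_fun measurableSet_Ioi (fun u (_ : u ∈ Ioi (0:ℝ)) => step2 u)]
  -- swap the order of integration
  rw [lintegral_lintegral_swap (by
    apply Measurable.aemeasurable
    exact ((((Real.measurable_exp.comp measurable_neg).comp measurable_fst).ennreal_ofReal).mul
      ((measurable_fst).ennreal_ofReal)).mul
      (((Real.measurable_exp.comp (measurable_fst.mul measurable_snd).neg).ennreal_ofReal).mul
        ((Real.measurable_log.comp measurable_snd).abs.ennreal_ofReal)))]
  -- compute the inner u-integral
  have step3 : ∀ t : ℝ, 0 < t →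
      (∫⁻ u in Ioi (0:ℝ), ENNReal.ofReal (Real.exp (-u)) * ENNReal.ofReal u *
        (ENNReal.ofReal (Real.exp (-(u*t))) * ENNReal.ofReal |Real.log t|))
      = ENNReal.ofReal (|Real.log t| / (1+t)^2) := by
    intro t ht
    have h1t : (0:ℝ) < 1 + t := by linarith
    have hcongr : ∀ u : ℝ, u ∈ Ioi (0:ℝ) →
        ENNReal.ofReal (Real.exp (-u)) * ENNReal.ofReal u *
          (ENNReal.ofReal (Real.exp (-(u*t))) * ENNReal.ofReal |Real.log t|)
        = ENNReal.ofReal |Real.log t| * ENNReal.ofReal (u * Real.exp (-((1+t)*u))) := by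
      intro u hu
      have hexp : Real.exp (-u) * Real.exp (-(u*t)) = Real.exp (-((1+t)*u)) := by
        rw [← Real.exp_add]; congr 1; ring
      rw [ENNReal.ofReal_mul (p := u) (le_of_lt hu), ← hexp,
          ENNReal.ofReal_mul (p := Real.exp (-u)) (Real.exp_pos _).le]
      ring
    rw [setLIntegral_congr_fun measurableSet_Ioi hcongr]
    rw [lintegral_const_mul (ENNReal.ofReal |Real.log t|)
      (f := fun u => ENNReal.ofReal (u * Real.exp (-((1+t)*u)))) (by fun_prop)]
    rw [lintegral_texp h1t]
    rw [← ENNReal.ofReal_mul (abs_nonneg _)]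
    congr 1
    rw [sq]
    field_simp
  rw [setLIntegral_congr_fun measurableSet_Ioi (fun t (ht : t ∈ Ioi (0:ℝ)) => step3 t ht)]
  exact lintegral_F

lemma expMeasure_Iic (x : ℝ) :
    (expMeasure 1) (Iic x) = ENNReal.ofReal (if 0 ≤ x then 1 - Real.exp (-x) else 0) := by
  haveI : IsProbabilityMeasure (expMeasure 1) := isProbabilityMeasure_expMeasure one_pos
  rw [← ofReal_cdf (expMeasure 1) x]
  rw [cdf_expMeasure_eq one_pos x, one_mul]

lemma expMeasure_Iic_zero : (expMeasure 1) (Iic 0) = 0 := by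
  rw [expMeasure_Iic]; norm_num

lemma map_weibull {Ω : Type*} [MeasurableSpace Ω] (μ : Measure Ω)
    [IsProbabilityMeasure μ] (X : Ω → ℝ) {α β : ℝ} (hα : 0 < α) (hβ : 0 < β)
    (hm : Measurable X) (hX : IsWeibull μ X α β) :
    μ.map X = (expMeasure 1).map (fun u => β * u ^ α⁻¹) := by
  haveI : IsProbabilityMeasure (expMeasure 1) := isProbabilityMeasure_expMeasure one_pos
  have hT : Measurable fun u : ℝ => β * u ^ α⁻¹ :=
    (measurable_id.pow_const _).const_mul β |>.mono le_rfl le_rfl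
  refine MeasureTheory.Measure.ext_of_Iic _ _ (fun a => ?_)
  rw [Measure.map_apply hm measurableSet_Iic, Measure.map_apply hT measurableSet_Iic]
  have hLHS : X ⁻¹' Iic a = {ω | X ω ≤ a} := rfl
  rw [hLHS, hX a]
  set S : Set ℝ := (fun u => β * u ^ α⁻¹) ⁻¹' Iic a with hS
  have hsub : S ∩ Iic 0 ⊆ Iic 0 := inter_subset_right
  by_cases ha : a ≤ 0
  · -- CDF is zero; preimage is contained in Iic 0 up to null
    rw [weibullCDF, if_pos ha, ENNReal.ofReal_zero]
    have hSsub : S ⊆ Iic 0 := by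
      intro u hu
      by_contra hpos
      simp only [mem_Iic, not_le] at hpos
      have hupos : (0:ℝ) < u := hpos
      have : (0:ℝ) < β * u ^ α⁻¹ := by positivity
      have := hu.out
      simp only [mem_Iic] at this
      linarith
    exact (measure_mono_null hSsub expMeasure_Iic_zero).symm
  · push_neg at ha
    rw [weibullCDF, if_neg (not_le.mpr ha)]
    set c : ℝ := (a / β) ^ α with hc
    have hc0 : 0 < c := Real.rpow_pos_of_pos (div_pos ha hβ) α
    have hkey : S ∩ Ioi 0 = Ioc 0 c := by
      ext u
      simp only [mem_inter_iff, mem_Ioi, mem_Ioc, hS, mem_preimage, mem_Iic]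
      constructor
      · rintro ⟨h1, h2⟩
        refine ⟨h2, ?_⟩
        have h3 : u ^ α⁻¹ ≤ a / β := (le_div_iff₀' hβ).mpr h1
        have h4 : (u ^ α⁻¹) ^ α ≤ (a / β) ^ α :=
          Real.rpow_le_rpow (Real.rpow_nonneg h2.le _) h3 hα.le
        rwa [Real.rpow_inv_rpow h2.le hα.ne'] at h4
      · rintro ⟨h1, h2⟩
        refine ⟨?_, h1⟩
        have h3 : u ^ α⁻¹ ≤ c ^ α⁻¹ := Real.rpow_le_rpow h1.le h2 (by positivity)
        rw [hc, Real.rpow_rpow_inv (div_pos ha hβ).le hα.ne'] at h3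
        calc β * u ^ α⁻¹ ≤ β * (a / β) := by
              exact mul_le_mul_of_nonneg_left h3 hβ.le
          _ = a := by field_simp
    have hdecomp : (expMeasure 1) S = (expMeasure 1) (Ioc 0 c) := by
      apply le_antisymm
      · calc (expMeasure 1) S ≤ (expMeasure 1) ((S ∩ Ioi 0) ∪ Iic 0) := by
              apply measure_mono
              intro u hu
              by_cases h : 0 < u
              · exact Or.inl ⟨hu, h⟩
              · exact Or.inr (not_lt.mp h)
          _ ≤ (expMeasure 1) (S ∩ Ioi 0) + (expMeasure 1) (Iic 0) := measure_union_le _ _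
          _ = (expMeasure 1) (Ioc 0 c) := by rw [hkey, expMeasure_Iic_zero, add_zero]
      · rw [← hkey]; exact measure_mono inter_subset_left
    rw [hdecomp]
    have hIic : (expMeasure 1) (Iic c) = (expMeasure 1) (Iic 0) + (expMeasure 1) (Ioc 0 c) := by
      rw [← measure_union (Iic_disjoint_Ioc le_rfl) measurableSet_Ioc, Iic_union_Ioc_eq_Iic hc0.le]
    rw [expMeasure_Iic_zero, zero_add] at hIic
    rw [← hIic, expMeasure_Iic c, if_pos hc0.le]


theorem weibull_kernel_H1_unbiased {Ω : Type*} [MeasurableSpace Ω] (μ : Measure Ω)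
    [IsProbabilityMeasure μ] (X₁ X₂ : Ω → ℝ) (α β : ℝ) (hα : 0 < α) (hβ : 0 < β)
    (hm₁ : Measurable X₁) (hm₂ : Measurable X₂)
    (hX₁ : IsWeibull μ X₁ α β) (hX₂ : IsWeibull μ X₂ α β)
    (hindep : IndepFun X₁ X₂ μ) :
    ∫ ω, ((Real.log (X₁ ω) + Real.log (X₂ ω)) / (2 * Real.log 2)
        - Real.log (min (X₁ ω) (X₂ ω)) / Real.log 2) ∂μ = 1 / α := by
  haveI : IsProbabilityMeasure (expMeasure 1) := isProbabilityMeasure_expMeasure one_pos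
  have hT : Measurable fun u : ℝ => β * u ^ α⁻¹ :=
    (measurable_id.pow_const _).const_mul β
  have hlog2 : (0:ℝ) < Real.log 2 := Real.log_pos one_lt_two
  -- a.s. positivity
  have hpos : ∀ (X : Ω → ℝ), IsWeibull μ X α β → ∀ᵐ ω ∂μ, 0 < X ω := by
    intro X hX
    rw [ae_iff]
    have hset : {ω | ¬ 0 < X ω} = {ω | X ω ≤ 0} := by ext ω; simp [not_lt]
    rw [hset, hX 0]
    simp [weibullCDF]
  have hpos₁ := hpos X₁ hX₁
  have hpos₂ := hpos X₂ hX₂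
  -- pointwise algebra: the kernel equals |log X₁ - log X₂| / (2 log 2)
  have halg : ∀ᵐ ω ∂μ, ((Real.log (X₁ ω) + Real.log (X₂ ω)) / (2 * Real.log 2)
      - Real.log (min (X₁ ω) (X₂ ω)) / Real.log 2)
      = (2 * Real.log 2)⁻¹ * |Real.log (X₁ ω) - Real.log (X₂ ω)| := by
    filter_upwards [hpos₁, hpos₂] with ω h1 h2
    rcases le_total (X₁ ω) (X₂ ω) with h | h
    · rw [min_eq_left h]
      have hle : Real.log (X₁ ω) ≤ Real.log (X₂ ω) := Real.log_le_log h1 h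
      rw [abs_of_nonpos (by linarith : Real.log (X₁ ω) - Real.log (X₂ ω) ≤ 0)]
      field_simp
      ring
    · rw [min_eq_right h]
      have hle : Real.log (X₂ ω) ≤ Real.log (X₁ ω) := Real.log_le_log h2 h
      rw [abs_of_nonneg (by linarith : (0:ℝ) ≤ Real.log (X₁ ω) - Real.log (X₂ ω))]
      field_simp
      ring
  rw [integral_congr_ae halg, integral_const_mul]
  -- convert to a lintegral
  have hmeasR : Measurable fun ω => |Real.log (X₁ ω) - Real.log (X₂ ω)| :=
    ((Real.measurable_log.comp hm₁).sub (Real.measurable_log.comp hm₂)).abs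
  rw [integral_eq_lintegral_of_nonneg_ae (ae_of_all _ (fun ω => abs_nonneg _))
    hmeasR.aestronglyMeasurable]
  have hFm : Measurable fun p : ℝ × ℝ => ENNReal.ofReal |Real.log p.1 - Real.log p.2| :=
    (((Real.measurable_log.comp measurable_fst).sub
      (Real.measurable_log.comp measurable_snd)).abs).ennreal_ofReal
  have h1 : ∫⁻ ω, ENNReal.ofReal |Real.log (X₁ ω) - Real.log (X₂ ω)| ∂μ
      = ∫⁻ p : ℝ × ℝ, ENNReal.ofReal |Real.log p.1 - Real.log p.2|
          ∂(μ.map (fun ω => (X₁ ω, X₂ ω))) :=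
    (lintegral_map hFm (hm₁.prodMk hm₂)).symm
  have h2 : μ.map (fun ω => (X₁ ω, X₂ ω)) = (μ.map X₁).prod (μ.map X₂) :=
    (ProbabilityTheory.indepFun_iff_map_prod_eq_prod_map_map hm₁.aemeasurable
      hm₂.aemeasurable).mp hindep
  rw [h1, h2, map_weibull μ X₁ hα hβ hm₁ hX₁, map_weibull μ X₂ hα hβ hm₂ hX₂,
    Measure.map_prod_map _ _ hT hT,
    lintegral_map hFm (hT.prodMap hT)]
  -- a.e. rewrite on the product
  have hae1 : ∀ᵐ p : ℝ × ℝ ∂((expMeasure 1).prod (expMeasure 1)), 0 < p.1 := by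
    rw [ae_iff]
    have hset : {p : ℝ × ℝ | ¬ 0 < p.1} = Iic 0 ×ˢ univ := by ext p; simp [not_lt]
    rw [hset, Measure.prod_prod, expMeasure_Iic_zero, zero_mul]
  have hae2 : ∀ᵐ p : ℝ × ℝ ∂((expMeasure 1).prod (expMeasure 1)), 0 < p.2 := by
    rw [ae_iff]
    have hset : {p : ℝ × ℝ | ¬ 0 < p.2} = univ ×ˢ Iic 0 := by ext p; simp [not_lt]
    rw [hset, Measure.prod_prod, expMeasure_Iic_zero, mul_zero]
  have hlogT : ∀ u : ℝ, 0 < u → Real.log (β * u ^ α⁻¹) = Real.log β + α⁻¹ * Real.log u := by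
    intro u hu
    rw [Real.log_mul hβ.ne' (Real.rpow_pos_of_pos hu _).ne', Real.log_rpow hu]
  have hcongr : ∀ᵐ p : ℝ × ℝ ∂((expMeasure 1).prod (expMeasure 1)),
      ENNReal.ofReal |Real.log ((Prod.map (fun u : ℝ => β * u ^ α⁻¹)
          (fun u : ℝ => β * u ^ α⁻¹) p).1)
        - Real.log ((Prod.map (fun u : ℝ => β * u ^ α⁻¹) (fun u : ℝ => β * u ^ α⁻¹) p).2)|
      = ENNReal.ofReal α⁻¹ * ENNReal.ofReal |Real.log p.1 - Real.log p.2| := by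
    filter_upwards [hae1, hae2] with p hp1 hp2
    simp only [Prod.map_fst, Prod.map_snd]
    rw [hlogT _ hp1, hlogT _ hp2,
      show Real.log β + α⁻¹ * Real.log p.1 - (Real.log β + α⁻¹ * Real.log p.2)
        = α⁻¹ * (Real.log p.1 - Real.log p.2) by ring,
      abs_mul, abs_of_pos (inv_pos.mpr hα),
      ENNReal.ofReal_mul (inv_pos.mpr hα).le]
  rw [lintegral_congr_ae hcongr, lintegral_const_mul _ hFm, lintegral_M]
  -- numeric finish
  rw [← ENNReal.ofReal_mul (inv_pos.mpr hα).le, ENNReal.toReal_ofReal (by positivity)]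
  rw [eq_div_iff hα.ne']
  field_simp
end

section
/- If X₁ and X₂ are i.i.d. Weibull with shape α and scale β, then E[H₂(X₁,X₂)] = log β, where H₂(x₁,x₂) = (log x₁ + log x₂)/2 − ψ(1)·H₁(x₁,x₂) and H₁(x₁,x₂) = (log x₁ + log x₂)/(2 log 2) − log(min{x₁,x₂})/log 2. That is, H₂ is an unbiased symmetric kernel for log β. -/
open MeasureTheory ProbabilityTheory Real

section WeibullAuxSection
open Set
open scoped ENNReal

namespace WeibullAux


lemma integrableOn_exp_neg_log :
    IntegrableOn (fun t : ℝ => Real.exp (-t) * Real.log t) (Ioi (0:ℝ)) := by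
  have h2 : IntegrableOn (fun t : ℝ => Real.exp (-t) * t ^ ((1/2:ℝ) - 1) * 2
      + Real.exp (-t) * t ^ ((2:ℝ) - 1)) (Ioi (0:ℝ)) :=
    ((Real.GammaIntegral_convergent one_half_pos).mul_const 2).add
      (Real.GammaIntegral_convergent two_pos)
  refine h2.integrable.mono' ?_ ?_
  · exact ((Real.measurable_exp.comp measurable_neg).mul Real.measurable_log).aestronglyMeasurable
  · filter_upwards [ae_restrict_mem measurableSet_Ioi] with t ht
    have ht0 : (0:ℝ) < t := ht
    have hexp : (0:ℝ) < Real.exp (-t) := Real.exp_pos _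
    have hlog : |Real.log t| ≤ 2 * t ^ ((1/2:ℝ) - 1) + t ^ ((2:ℝ) - 1) := by
      have he1 : t ^ ((2:ℝ) - 1) = t := by rw [show (2:ℝ) - 1 = 1 by norm_num, Real.rpow_one]
      have he2 : (1/2:ℝ) - 1 = -(1/2 : ℝ) := by norm_num
      rcases le_or_gt 1 t with h1 | h1
      · have : Real.log t ≤ t - 1 := Real.log_le_sub_one_of_pos ht0
        have hnn : 0 ≤ Real.log t := Real.log_nonneg h1
        have hr : 0 ≤ t ^ ((1/2:ℝ) - 1) := Real.rpow_nonneg ht0.le _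
        rw [abs_of_nonneg hnn, he1]
        linarith
      · have hu : Real.log (t ^ ((1/2:ℝ) - 1)) ≤ t ^ ((1/2:ℝ) - 1) - 1 :=
          Real.log_le_sub_one_of_pos (Real.rpow_pos_of_pos ht0 _)
        rw [Real.log_rpow ht0] at hu
        have hneg : Real.log t < 0 := Real.log_neg ht0 h1
        have hr2 : 0 ≤ t ^ ((2:ℝ) - 1) := Real.rpow_nonneg ht0.le _
        rw [abs_of_neg hneg]
        norm_num at hu ⊢
        linarith
    calc ‖Real.exp (-t) * Real.log t‖ = Real.exp (-t) * |Real.log t| := by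
          rw [norm_mul, Real.norm_eq_abs, Real.norm_eq_abs, abs_of_pos hexp]
      _ ≤ Real.exp (-t) * (2 * t ^ ((1/2:ℝ) - 1) + t ^ ((2:ℝ) - 1)) := by
          exact mul_le_mul_of_nonneg_left hlog hexp.le
      _ = Real.exp (-t) * t ^ ((1/2:ℝ) - 1) * 2 + Real.exp (-t) * t ^ ((2:ℝ) - 1) := by ring

lemma integral_exp_neg_log :
    ∫ t in Ioi (0:ℝ), Real.exp (-t) * Real.log t = -Real.eulerMascheroniConstant := by
  have h1 := Complex.hasDerivAt_GammaIntegral (s := 1) (by norm_num)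
  have heq : Complex.GammaIntegral =ᶠ[nhds (1:ℂ)] Complex.Gamma := by
    have hopen : IsOpen {s : ℂ | 0 < s.re} := isOpen_lt continuous_const Complex.continuous_re
    filter_upwards [hopen.mem_nhds (by norm_num : (0:ℝ) < (1:ℂ).re)] with s hs
    exact (Complex.Gamma_eq_integral hs).symm
  have h2 : HasDerivAt Complex.GammaIntegral (-(Real.eulerMascheroniConstant : ℂ)) 1 :=
    Complex.hasDerivAt_Gamma_one.congr_of_eventuallyEq heq
  have h3 := h1.unique h2
  simp only [sub_self, Complex.cpow_zero, one_mul] at h3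
  have h4 : ∫ t in Ioi (0:ℝ), ((Real.exp (-t) * Real.log t : ℝ) : ℂ)
      = -(Real.eulerMascheroniConstant : ℂ) := by
    rw [← h3]
    refine setIntegral_congr_fun measurableSet_Ioi (fun t _ => ?_)
    push_cast
    ring
  have h5 := integral_ofReal (𝕜 := ℂ) (f := fun t : ℝ => Real.exp (-t) * Real.log t)
    (μ := volume.restrict (Ioi (0:ℝ)))
  exact Complex.ofReal_injective (h5.symm.trans (h4.trans (by push_cast; ring)))


noncomputable def wpdf (α β t : ℝ) : ℝ :=
  if t ≤ 0 then 0 else α / β * (t / β) ^ (α - 1) * Real.exp (-(t / β) ^ α)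

variable {α β : ℝ}

lemma wpdf_nonneg (hα : 0 < α) (hβ : 0 < β) (t : ℝ) : 0 ≤ wpdf α β t := by
  unfold wpdf
  split_ifs with h
  · exact le_refl 0
  · push_neg at h
    exact mul_nonneg (mul_nonneg (div_nonneg hα.le hβ.le)
      (Real.rpow_nonneg (div_nonneg h.le hβ.le) _)) (Real.exp_pos _).le

lemma measurable_wpdf : Measurable (wpdf α β) := by
  unfold wpdf
  exact Measurable.ite measurableSet_Iic measurable_const (by fun_prop)

lemma hasDerivAt_wpdf (hβ : 0 < β) {t : ℝ} (ht : 0 < t) :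
    HasDerivAt (fun u : ℝ => -Real.exp (-(u / β) ^ α)) (wpdf α β t) t := by
  have h1 : HasDerivAt (fun u : ℝ => u / β) (1 / β) t := by
    simpa using (hasDerivAt_id t).div_const β
  have h2 : HasDerivAt (fun y : ℝ => y ^ α) (α * (t / β) ^ (α - 1)) (t / β) :=
    Real.hasDerivAt_rpow_const (Or.inl (div_pos ht hβ).ne')
  have h3 : HasDerivAt (fun u : ℝ => (u / β) ^ α) (α * (t / β) ^ (α - 1) * (1 / β)) t :=
    by have h := h2.comp t h1; exact h
  have h4 : HasDerivAt (fun u : ℝ => -Real.exp (-(u / β) ^ α))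
      (-(Real.exp (-(t / β) ^ α) * -(α * (t / β) ^ (α - 1) * (1 / β)))) t := by
    have h := (h3.neg).exp.neg; exact h
  convert h4 using 1
  rw [wpdf, if_neg (not_le.mpr ht)]
  ring

lemma tendsto_aux (hα : 0 < α) (hβ : 0 < β) :
    Filter.Tendsto (fun u : ℝ => -Real.exp (-(u / β) ^ α)) Filter.atTop (nhds 0) := by
  have h0 : Filter.Tendsto (fun u : ℝ => u / β) Filter.atTop Filter.atTop :=
    Filter.tendsto_id.atTop_div_const hβ
  have h1 : Filter.Tendsto (fun u : ℝ => (u / β) ^ α) Filter.atTop Filter.atTop :=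
    (tendsto_rpow_atTop hα).comp h0
  have h2 : Filter.Tendsto (fun u : ℝ => -(u / β) ^ α) Filter.atTop Filter.atBot :=
    Filter.tendsto_neg_atTop_atBot.comp h1
  simpa using (Real.tendsto_exp_atBot.comp h2).neg

lemma continuous_aux (hα : 0 < α) (hβ : 0 < β) (x : ℝ) :
    ContinuousAt (fun u : ℝ => -Real.exp (-(u / β) ^ α)) x := by
  have h : ContinuousAt (fun u : ℝ => (u / β) ^ α) x :=
    ContinuousAt.rpow_const (continuousAt_id.div_const β) (Or.inr hα.le)
  exact (Real.continuous_exp.continuousAt.comp h.neg).neg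

lemma tail_spec (hα : 0 < α) (hβ : 0 < β) {x : ℝ} (hx : 0 ≤ x) :
    IntegrableOn (wpdf α β) (Ioi x) ∧
      ∫ t in Ioi x, wpdf α β t = Real.exp (-(x / β) ^ α) := by
  have hderiv : ∀ t ∈ Ioi x, HasDerivAt (fun u : ℝ => -Real.exp (-(u / β) ^ α))
      (wpdf α β t) t := fun t ht => hasDerivAt_wpdf hβ (lt_of_le_of_lt hx ht)
  have hpos : ∀ t ∈ Ioi x, 0 ≤ wpdf α β t := fun t _ => wpdf_nonneg hα hβ t
  have hcont : ContinuousWithinAt (fun u : ℝ => -Real.exp (-(u / β) ^ α)) (Ici x) x :=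
    (continuous_aux hα hβ x).continuousWithinAt
  have htend := tendsto_aux hα hβ
  constructor
  · exact integrableOn_Ioi_deriv_of_nonneg hcont hderiv hpos htend
  · rw [integral_Ioi_of_hasDerivAt_of_nonneg hcont hderiv hpos htend]
    ring

noncomputable def wMeasure (α β : ℝ) : Measure ℝ :=
  volume.withDensity fun t => ENNReal.ofReal (wpdf α β t)

lemma wMeasure_Ioi (hα : 0 < α) (hβ : 0 < β) {x : ℝ} (hx : 0 ≤ x) :
    wMeasure α β (Ioi x) = ENNReal.ofReal (Real.exp (-(x / β) ^ α)) := by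
  obtain ⟨hint, hval⟩ := tail_spec hα hβ hx
  rw [wMeasure, withDensity_apply _ measurableSet_Ioi,
    ← ofReal_integral_eq_lintegral_ofReal hint
      (Filter.Eventually.of_forall fun t => wpdf_nonneg hα hβ t), hval]

lemma wMeasure_Iic_nonpos (hα : 0 < α) (hβ : 0 < β) {x : ℝ} (hx : x ≤ 0) :
    wMeasure α β (Iic x) = 0 := by
  rw [wMeasure, withDensity_apply _ measurableSet_Iic]
  have h0 : ∀ t ∈ Iic x, ENNReal.ofReal (wpdf α β t) = (fun _ : ℝ => (0 : ENNReal)) t := by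
    intro t ht
    rw [wpdf, if_pos (le_trans ht hx)]
    simp
  rw [setLIntegral_congr_fun measurableSet_Iic h0, lintegral_zero]

lemma wMeasure_univ (hα : 0 < α) (hβ : 0 < β) : wMeasure α β univ = 1 := by
  rw [← Iic_union_Ioi (a := (0:ℝ)), measure_union (Iic_disjoint_Ioi le_rfl) measurableSet_Ioi,
    wMeasure_Iic_nonpos hα hβ le_rfl, wMeasure_Ioi hα hβ le_rfl, zero_add,
    zero_div, Real.zero_rpow hα.ne', neg_zero, Real.exp_zero, ENNReal.ofReal_one]

lemma isProbabilityMeasure_wMeasure (hα : 0 < α) (hβ : 0 < β) :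
    IsProbabilityMeasure (wMeasure α β) := ⟨wMeasure_univ hα hβ⟩

lemma wMeasure_Iic (hα : 0 < α) (hβ : 0 < β) (x : ℝ) :
    wMeasure α β (Iic x) = ENNReal.ofReal (weibullCDF α β x) := by
  rcases le_or_gt x 0 with hx | hx
  · rw [wMeasure_Iic_nonpos hα hβ hx, weibullCDF, if_pos hx, ENNReal.ofReal_zero]
  · have hcompl : Iic x = (Ioi x)ᶜ := by simp
    rw [hcompl, measure_compl measurableSet_Ioi (by
      rw [wMeasure_Ioi hα hβ hx.le]; exact ENNReal.ofReal_ne_top),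
      wMeasure_univ hα hβ, wMeasure_Ioi hα hβ hx.le, weibullCDF, if_neg (not_le.mpr hx),
      ENNReal.ofReal_sub _ (Real.exp_pos _).le, ENNReal.ofReal_one]

lemma map_eq {Ω : Type*} [MeasurableSpace Ω] (μ : Measure Ω) [IsProbabilityMeasure μ]
    {X : Ω → ℝ} (hα : 0 < α) (hβ : 0 < β) (hm : Measurable X) (hX : IsWeibull μ X α β) :
    μ.map X = wMeasure α β := by
  haveI := Measure.isProbabilityMeasure_map (μ := μ) hm.aemeasurable
  refine Measure.ext_of_Iic (μ.map X) (wMeasure α β) fun x => ?_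
  rw [Measure.map_apply hm measurableSet_Iic, wMeasure_Iic hα hβ x]
  exact hX x

section Expectation

lemma integrableOn_exp_neg : IntegrableOn (fun y : ℝ => Real.exp (-y)) (Ioi (0:ℝ)) := by
  simpa using exp_neg_integrableOn_Ioi (0:ℝ) one_pos

lemma integrable_integral_log (hα : 0 < α) (hβ : 0 < β) :
    Integrable Real.log (wMeasure α β) ∧
      ∫ t, Real.log t ∂(wMeasure α β)
        = Real.log β - Real.eulerMascheroniConstant / α := by
  set g : ℝ → ℝ := fun y => Real.exp (-y) * (Real.log β + Real.log y / α) with hg_def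
  have h1 : IntegrableOn (fun y : ℝ => Real.exp (-y) * Real.log β) (Ioi (0:ℝ)) :=
    integrableOn_exp_neg.mul_const _
  have h2 : IntegrableOn (fun y : ℝ => Real.exp (-y) * Real.log y * α⁻¹) (Ioi (0:ℝ)) :=
    integrableOn_exp_neg_log.mul_const _
  have hg_eq : g = fun y => Real.exp (-y) * Real.log β
      + Real.exp (-y) * Real.log y * α⁻¹ := by
    funext y; simp only [hg_def]; ring
  have hg_int : IntegrableOn g (Ioi (0:ℝ)) := by rw [hg_eq]; exact h1.add h2
  have hg_val : ∫ y in Ioi (0:ℝ), g y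
      = Real.log β - Real.eulerMascheroniConstant / α := by
    rw [hg_eq, integral_add h1 h2, integral_mul_const, integral_mul_const,
      integral_exp_neg_Ioi_zero, integral_exp_neg_log]
    ring
  set F : ℝ → ℝ := fun x => (α * x ^ (α - 1)) • g (x ^ α) with hF_def
  have hF_int : IntegrableOn F (Ioi (0:ℝ)) := by
    have h := (integrableOn_Ioi_comp_rpow_iff g hα.ne').mpr hg_int
    rw [abs_of_pos hα] at h
    exact h
  have hF_val : ∫ x in Ioi (0:ℝ), F x
      = Real.log β - Real.eulerMascheroniConstant / α := by
    rw [hF_def, integral_comp_rpow_Ioi_of_pos hα, hg_val]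
  -- pointwise identity on Ioi 0
  have hpt : ∀ t ∈ Ioi (0:ℝ), Real.log t * wpdf α β t = β⁻¹ * F (β⁻¹ * t) := by
    intro t ht
    have ht0 : (0:ℝ) < t := ht
    have htβ : (0:ℝ) < t / β := div_pos ht0 hβ
    have hbt : β⁻¹ * t = t / β := by rw [inv_mul_eq_div]
    rw [hbt]
    simp only [hF_def, hg_def, smul_eq_mul]
    rw [Real.log_rpow htβ, wpdf, if_neg (not_le.mpr ht0),
      Real.log_div ht0.ne' hβ.ne']
    field_simp
    ring
  have hcomp_int : IntegrableOn (fun t => Real.log t * wpdf α β t) (Ioi (0:ℝ)) := by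
    have h := (integrableOn_Ioi_comp_mul_left_iff F 0 (inv_pos.mpr hβ)).mpr
      (by rwa [mul_zero])
    exact IntegrableOn.congr_fun (h.const_mul β⁻¹ : IntegrableOn _ _ _)
      (fun t ht => (hpt t ht).symm) measurableSet_Ioi
  have hcomp_val : ∫ t in Ioi (0:ℝ), Real.log t * wpdf α β t
      = Real.log β - Real.eulerMascheroniConstant / α := by
    rw [setIntegral_congr_fun measurableSet_Ioi hpt, MeasureTheory.integral_const_mul,
      integral_comp_mul_left_Ioi F 0 (inv_pos.mpr hβ), mul_zero, smul_eq_mul, hF_val,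
      inv_inv]
    rw [← mul_assoc, inv_mul_cancel₀ hβ.ne', one_mul]
  -- globalize
  have hind : (fun t => Real.log t * wpdf α β t)
      = (Ioi (0:ℝ)).indicator (fun t => Real.log t * wpdf α β t) := by
    funext t
    by_cases ht : (0:ℝ) < t
    · rw [Set.indicator_of_mem (mem_Ioi.mpr ht)]
    · rw [Set.indicator_of_notMem (by simpa using ht), wpdf, if_pos (not_lt.mp ht), mul_zero]
  have hglob_int : Integrable (fun t => Real.log t * wpdf α β t) (volume : Measure ℝ) := by
    rw [hind]
    exact (integrable_indicator_iff measurableSet_Ioi).mpr hcomp_int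
  have hglob_val : ∫ t, Real.log t * wpdf α β t
      = Real.log β - Real.eulerMascheroniConstant / α := by
    rw [hind, integral_indicator measurableSet_Ioi, hcomp_val]
  constructor
  · rw [wMeasure, integrable_withDensity_iff measurable_wpdf.ennreal_ofReal
      (Filter.Eventually.of_forall fun _ => ENNReal.ofReal_lt_top)]
    refine hglob_int.congr (Filter.Eventually.of_forall fun t => ?_)
    show Real.log t * wpdf α β t = Real.log t * (ENNReal.ofReal (wpdf α β t)).toReal
    rw [ENNReal.toReal_ofReal (wpdf_nonneg hα hβ t)]
  · have hden : (fun t => ENNReal.ofReal (wpdf α β t))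
        = fun t => ((wpdf α β t).toNNReal : ENNReal) := rfl
    rw [wMeasure, hden, integral_withDensity_eq_integral_smul
      measurable_wpdf.real_toNNReal Real.log]
    rw [← hglob_val]
    congr 1
    funext t
    rw [NNReal.smul_def, Real.coe_toNNReal _ (wpdf_nonneg hα hβ t), smul_eq_mul, mul_comm]

lemma elog {Ω : Type*} [MeasurableSpace Ω] (μ : Measure Ω) [IsProbabilityMeasure μ]
    {X : Ω → ℝ} (hα : 0 < α) (hβ : 0 < β) (hm : Measurable X) (hX : IsWeibull μ X α β) :
    Integrable (fun ω => Real.log (X ω)) μ ∧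
      ∫ ω, Real.log (X ω) ∂μ = Real.log β - Real.eulerMascheroniConstant / α := by
  have hmap := map_eq μ hα hβ hm hX
  obtain ⟨hint, hval⟩ := integrable_integral_log (β := β) hα hβ
  rw [← hmap] at hint hval
  constructor
  · exact (integrable_map_measure Real.measurable_log.aestronglyMeasurable
      hm.aemeasurable).mp hint
  · rw [← integral_map hm.aemeasurable Real.measurable_log.aestronglyMeasurable]
    exact hval

end Expectation

section Min

lemma weibullCDF_nonneg (hα : 0 < α) (hβ : 0 < β) (x : ℝ) : 0 ≤ weibullCDF α β x := by
  rw [weibullCDF]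
  split_ifs with h
  · exact le_refl 0
  · push_neg at h
    have : Real.exp (-(x / β) ^ α) ≤ 1 := by
      rw [← Real.exp_zero]
      exact Real.exp_le_exp.mpr (neg_nonpos.mpr (Real.rpow_nonneg (div_nonneg h.le hβ.le) _))
    linarith

lemma survival {Ω : Type*} [MeasurableSpace Ω] (μ : Measure Ω) [IsProbabilityMeasure μ]
    {X : Ω → ℝ} (hα : 0 < α) (hβ : 0 < β) (hm : Measurable X) (hX : IsWeibull μ X α β)
    (x : ℝ) : μ (X ⁻¹' (Ioi x)) = ENNReal.ofReal (1 - weibullCDF α β x) := by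
  have hc : X ⁻¹' (Ioi x) = {ω | X ω ≤ x}ᶜ := by
    ext ω; simp [not_le]
  rw [hc, measure_compl (show MeasurableSet {ω | X ω ≤ x} from hm measurableSet_Iic) (measure_ne_top μ _), measure_univ, hX x,
    ENNReal.ofReal_sub _ (weibullCDF_nonneg hα hβ x), ENNReal.ofReal_one]

lemma isWeibull_min {Ω : Type*} [MeasurableSpace Ω] (μ : Measure Ω) [IsProbabilityMeasure μ]
    {X₁ X₂ : Ω → ℝ} (hα : 0 < α) (hβ : 0 < β) (hm₁ : Measurable X₁) (hm₂ : Measurable X₂)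
    (hX₁ : IsWeibull μ X₁ α β) (hX₂ : IsWeibull μ X₂ α β) (hindep : IndepFun X₁ X₂ μ) :
    IsWeibull μ (fun ω => min (X₁ ω) (X₂ ω)) α (β * 2 ^ (-α⁻¹ : ℝ)) := by
  intro x
  have hset : {ω | min (X₁ ω) (X₂ ω) ≤ x} = (X₁ ⁻¹' (Ioi x) ∩ X₂ ⁻¹' (Ioi x))ᶜ := by
    ext ω
    simp only [mem_setOf_eq, mem_compl_iff, mem_inter_iff, mem_preimage, mem_Ioi, min_le_iff,
      not_and_or, not_lt]
  rw [hset, measure_compl ((hm₁ measurableSet_Ioi).inter (hm₂ measurableSet_Ioi))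
    (measure_ne_top μ _), measure_univ,
    hindep.measure_inter_preimage_eq_mul (Ioi x) (Ioi x) measurableSet_Ioi measurableSet_Ioi,
    survival μ hα hβ hm₁ hX₁ x, survival μ hα hβ hm₂ hX₂ x]
  rcases le_or_gt x 0 with hx | hx
  · have h0 : weibullCDF α β x = 0 := by rw [weibullCDF, if_pos hx]
    have h0' : weibullCDF α (β * 2 ^ (-α⁻¹ : ℝ)) x = 0 := by rw [weibullCDF, if_pos hx]
    rw [h0, h0']
    simp
  · have hu : 0 < x / β := div_pos hx hβ
    have hkey : (x / (β * 2 ^ (-α⁻¹ : ℝ))) ^ α = 2 * (x / β) ^ α := by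
      have h1 : x / (β * 2 ^ (-α⁻¹ : ℝ)) = (x / β) * 2 ^ (α⁻¹ : ℝ) := by
        rw [Real.rpow_neg (by norm_num : (0:ℝ) ≤ 2)]
        field_simp
      rw [h1, Real.mul_rpow hu.le (Real.rpow_nonneg (by norm_num) _),
        ← Real.rpow_mul (by norm_num : (0:ℝ) ≤ 2), inv_mul_cancel₀ hα.ne', Real.rpow_one]
      ring
    have hs : 1 - weibullCDF α β x = Real.exp (-(x / β) ^ α) := by
      rw [weibullCDF, if_neg (not_le.mpr hx)]
      ring
    rw [hs, ← ENNReal.ofReal_mul (Real.exp_pos _).le, ← Real.exp_add,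
      weibullCDF, if_neg (not_le.mpr hx), hkey,
      ENNReal.ofReal_sub _ (Real.exp_pos _).le, ENNReal.ofReal_one]
    have : -(x / β) ^ α + -(x / β) ^ α = -(2 * (x / β) ^ α) := by ring
    rw [this]

end Min

end WeibullAux

end WeibullAuxSection

theorem weibull_kernel_H2_unbiased {Ω : Type*} [MeasurableSpace Ω] (μ : Measure Ω)
    [IsProbabilityMeasure μ] (X₁ X₂ : Ω → ℝ) (α β : ℝ) (hα : 0 < α) (hβ : 0 < β)
    (hm₁ : Measurable X₁) (hm₂ : Measurable X₂)
    (hX₁ : IsWeibull μ X₁ α β) (hX₂ : IsWeibull μ X₂ α β)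
    (hindep : IndepFun X₁ X₂ μ) :
    ∫ ω, ((Real.log (X₁ ω) + Real.log (X₂ ω)) / 2
        - (-Real.eulerMascheroniConstant)
          * ((Real.log (X₁ ω) + Real.log (X₂ ω)) / (2 * Real.log 2)
            - Real.log (min (X₁ ω) (X₂ ω)) / Real.log 2)) ∂μ
      = Real.log β := by
  have hl2 : Real.log 2 ≠ 0 := (Real.log_pos one_lt_two).ne'
  obtain ⟨hi₁, hv₁⟩ := WeibullAux.elog μ hα hβ hm₁ hX₁
  obtain ⟨hi₂, hv₂⟩ := WeibullAux.elog μ hα hβ hm₂ hX₂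
  have hmmin : Measurable (fun ω => min (X₁ ω) (X₂ ω)) := hm₁.min hm₂
  have h2pos : (0:ℝ) < (2:ℝ) ^ (-α⁻¹ : ℝ) := Real.rpow_pos_of_pos two_pos _
  have hb' : (0:ℝ) < β * 2 ^ (-α⁻¹ : ℝ) := mul_pos hβ h2pos
  obtain ⟨hi₃, hv₃⟩ := WeibullAux.elog μ hα hb' hmmin
    (WeibullAux.isWeibull_min μ hα hβ hm₁ hm₂ hX₁ hX₂ hindep)
  have hlogb' : Real.log (β * 2 ^ (-α⁻¹ : ℝ)) = Real.log β + (-α⁻¹) * Real.log 2 := by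
    rw [Real.log_mul hβ.ne' h2pos.ne', Real.log_rpow two_pos]
  rw [hlogb'] at hv₃
  set a : ℝ := -Real.eulerMascheroniConstant with ha
  set l : ℝ := Real.log 2 with hl
  have hfun : (fun ω => (Real.log (X₁ ω) + Real.log (X₂ ω)) / 2
        - a * ((Real.log (X₁ ω) + Real.log (X₂ ω)) / (2 * l)
            - Real.log (min (X₁ ω) (X₂ ω)) / l))
      = fun ω => ((1/2 - a/(2*l)) * Real.log (X₁ ω)
        + (1/2 - a/(2*l)) * Real.log (X₂ ω))
        + (a/l) * Real.log (min (X₁ ω) (X₂ ω)) := by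
    funext ω
    field_simp
    ring
  have hiA : Integrable (fun ω => (1/2 - a/(2*l)) * Real.log (X₁ ω)
      + (1/2 - a/(2*l)) * Real.log (X₂ ω)) μ := (hi₁.const_mul _).add (hi₂.const_mul _)
  have hiB : Integrable (fun ω => (a/l) * Real.log (min (X₁ ω) (X₂ ω))) μ := hi₃.const_mul _
  have hiC : Integrable (fun ω => (1/2 - a/(2*l)) * Real.log (X₁ ω)) μ := hi₁.const_mul _
  have hiD : Integrable (fun ω => (1/2 - a/(2*l)) * Real.log (X₂ ω)) μ := hi₂.const_mul _
  rw [hfun, integral_add hiA hiB, integral_add hiC hiD,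
    MeasureTheory.integral_const_mul, MeasureTheory.integral_const_mul,
    MeasureTheory.integral_const_mul, hv₁, hv₂, hv₃, ha]
  field_simp
  ring
end
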